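/- The quantity B̃|q₁(T)|² + Ã|q₂(T)|² is a constant of motion of the envelope system: for every solution (q₁, q₂) of i q₁′ = q₁ + Ã conj(q₁) q₂, i q₂′ = q₂ + B̃ q₁², the function T ↦ B̃|q₁(T)|² + Ã|q₂(T)|² has zero derivative, hence is constant. -/

import Mathlib

/-- `B̃|q₁|² + Ã|q₂|²` is a constant of motion of the envelope system
`i q₁′ = q₁ + Ã conj(q₁) q₂`, `i q₂′ = q₂ + B̃ q₁²`. -/
theorem envelope_constant_of_motion
    (A B : ℝ) (q₁ q₂ : ℝ → ℂ)
    (hq₁ : Differentiable ℝ q₁) (hq₂ : Differentiable ℝ q₂)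
    (heq₁ : ∀ T : ℝ, Complex.I * deriv q₁ T =
      q₁ T + (A : ℂ) * (starRingEnd ℂ) (q₁ T) * q₂ T)
    (heq₂ : ∀ T : ℝ, Complex.I * deriv q₂ T = q₂ T + (B : ℂ) * (q₁ T) ^ 2) :
    let E : ℝ → ℝ := fun T => B * ‖q₁ T‖ ^ 2 + A * ‖q₂ T‖ ^ 2
    (∀ T : ℝ, deriv E T = 0) ∧ ∀ T S : ℝ, E T = E S := by
  intro E
  -- explicit formulas for the derivatives
  have hd₁ : ∀ T, deriv q₁ T =
      -Complex.I * (q₁ T + (A : ℂ) * (starRingEnd ℂ) (q₁ T) * q₂ T) := by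
    intro T
    have h := heq₁ T
    have : -Complex.I * (Complex.I * deriv q₁ T) =
        -Complex.I * (q₁ T + (A : ℂ) * (starRingEnd ℂ) (q₁ T) * q₂ T) := by rw [h]
    calc deriv q₁ T = -Complex.I * (Complex.I * deriv q₁ T) := by
            rw [← mul_assoc]; simp [Complex.I_mul_I]
      _ = _ := this
  have hd₂ : ∀ T, deriv q₂ T = -Complex.I * (q₂ T + (B : ℂ) * (q₁ T) ^ 2) := by
    intro T
    have h := heq₂ T
    have : -Complex.I * (Complex.I * deriv q₂ T) =
        -Complex.I * (q₂ T + (B : ℂ) * (q₁ T) ^ 2) := by rw [h]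
    calc deriv q₂ T = -Complex.I * (Complex.I * deriv q₂ T) := by
            rw [← mul_assoc]; simp [Complex.I_mul_I]
      _ = _ := this
  -- the complex "energy"
  set F : ℝ → ℂ := fun T =>
    (B : ℂ) * ((starRingEnd ℂ) (q₁ T) * q₁ T) +
    (A : ℂ) * ((starRingEnd ℂ) (q₂ T) * q₂ T) with hF
  have hEF : ∀ T, E T = (F T).re := by
    intro T
    simp only [hF, Complex.add_re, Complex.mul_re, Complex.ofReal_re, Complex.ofReal_im,
      Complex.mul_conj']
    simp [Complex.mul_conj', E,
      Complex.sq_norm, Complex.normSq_apply]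
  -- F has zero derivative
  have hF0 : ∀ T, HasDerivAt F 0 T := by
    intro T
    have h1 : HasDerivAt q₁ (deriv q₁ T) T := (hq₁ T).hasDerivAt
    have h2 : HasDerivAt q₂ (deriv q₂ T) T := (hq₂ T).hasDerivAt
    have hc1 : HasDerivAt (fun T => (starRingEnd ℂ) (q₁ T))
        ((starRingEnd ℂ) (deriv q₁ T)) T :=
      Complex.conjCLE.toContinuousLinearMap.hasFDerivAt.comp_hasDerivAt T h1
    have hc2 : HasDerivAt (fun T => (starRingEnd ℂ) (q₂ T))
        ((starRingEnd ℂ) (deriv q₂ T)) T :=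
      Complex.conjCLE.toContinuousLinearMap.hasFDerivAt.comp_hasDerivAt T h2
    have hD : HasDerivAt F
        ((B : ℂ) * ((starRingEnd ℂ) (deriv q₁ T) * q₁ T +
            (starRingEnd ℂ) (q₁ T) * deriv q₁ T) +
         (A : ℂ) * ((starRingEnd ℂ) (deriv q₂ T) * q₂ T +
            (starRingEnd ℂ) (q₂ T) * deriv q₂ T)) T :=
      (((hc1.mul h1).const_mul ((B : ℂ))).add ((hc2.mul h2).const_mul ((A : ℂ))))
    convert hD using 1
    rw [hd₁ T, hd₂ T]
    simp only [map_mul, map_add, map_neg, Complex.conj_I, Complex.conj_conj, map_pow,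
      Complex.conj_ofReal]
    ring
  have hE' : ∀ T, HasDerivAt E 0 T := by
    intro T
    have : HasDerivAt (fun T => (F T).re) ((0 : ℂ).re) T :=
      Complex.reCLM.hasFDerivAt.comp_hasDerivAt T (hF0 T)
    simpa [funext hEF] using this
  refine ⟨fun T => (hE' T).deriv, fun T S => ?_⟩
  have : ∀ x y : ℝ, E x = E y :=
    fun x y => by
      have h := is_const_of_deriv_eq_zero (f := E)
        (fun t => (hE' t).differentiableAt) (fun t => (hE' t).deriv) x y
      exact h
  exact this T S
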